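/- Let α, β, k₁, k₂, k₃ be nonnegative integers with α ≥ 1 and β = k₁ + k₂ + k₃. Then N(α,β;α,k₁,k₂,k₃) = N(1,β;1,k₁,k₂,k₃). -/
import Mathlib


open Finset

/-- The Mixed Generalized Gaussian Number `N(α,β;k₀,k₁,k₂,k₃)`. -/
def MGN (a b k₀ k₁ k₂ k₃ : ℕ) : ℚ :=
  ((∏ i ∈ range k₀, ((2 ^ a - 2 ^ i : ℚ) * 2 ^ b)) *
   (∏ i ∈ range k₁, ((8 ^ b - 4 ^ b * 2 ^ i : ℚ) * 2 ^ a)) *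
   (∏ i ∈ range k₂, ((4 ^ b - 2 ^ (b + k₁ + i) : ℚ) * 2 ^ a)) *
   (∏ i ∈ range k₃, (2 ^ b - 2 ^ (k₁ + k₂ + i) : ℚ))) /
  ((∏ i ∈ range k₀, (2 ^ (k₀ + k₁ + k₂ + k₃) - 2 ^ (k₁ + k₂ + k₃ + i) : ℚ)) *
   (∏ i ∈ range k₁, ((8 ^ k₁ - 4 ^ k₁ * 2 ^ i : ℚ) * 2 ^ (k₀ + 2 * k₂ + k₃))) *
   (∏ i ∈ range k₂, ((4 ^ k₂ - 2 ^ (k₂ + i) : ℚ) * 2 ^ (k₀ + 2 * k₁ + k₃))) *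
   (∏ i ∈ range k₃, (2 ^ (k₁ + k₂ + k₃) - 2 ^ (k₁ + k₂ + i) : ℚ)))

lemma two_pow_sub_ne_zero {a b : ℕ} (h : b < a) : (2:ℚ) ^ a - 2 ^ b ≠ 0 :=
  sub_ne_zero.mpr (ne_of_gt (by exact_mod_cast pow_lt_pow_right₀ (by norm_num : (1:ℚ) < 2) h))

lemma MGN_eval (a k₁ k₂ k₃ : ℕ) :
    MGN a (k₁ + k₂ + k₃) a k₁ k₂ k₃ =
      ((∏ i ∈ range k₁, ((8:ℚ) ^ (k₁ + k₂ + k₃) - 4 ^ (k₁ + k₂ + k₃) * 2 ^ i)) *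
       (∏ i ∈ range k₂, ((4:ℚ) ^ (k₁ + k₂ + k₃) - 2 ^ ((k₁ + k₂ + k₃) + k₁ + i)))) /
      (2 ^ ((2 * k₂ + k₃) * k₁ + (2 * k₁ + k₃) * k₂) *
       (∏ i ∈ range k₁, ((8:ℚ) ^ k₁ - 4 ^ k₁ * 2 ^ i)) *
       (∏ i ∈ range k₂, ((4:ℚ) ^ k₂ - 2 ^ (k₂ + i)))) := by
  unfold MGN
  have hD1 : ∏ i ∈ range a, ((2:ℚ) ^ (a + k₁ + k₂ + k₃) - 2 ^ (k₁ + k₂ + k₃ + i)) =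
      ∏ i ∈ range a, (2 ^ (k₁ + k₂ + k₃) * ((2:ℚ) ^ a - 2 ^ i)) := by
    refine Finset.prod_congr rfl fun i _ => ?_
    rw [show a + k₁ + k₂ + k₃ = a + (k₁ + k₂ + k₃) by ring, pow_add, pow_add]
    ring
  rw [hD1]
  simp only [Finset.prod_mul_distrib, Finset.prod_const, Finset.card_range]
  have hP : (∏ i ∈ range a, ((2:ℚ) ^ a - 2 ^ i)) ≠ 0 :=
    Finset.prod_ne_zero_iff.mpr fun i hi =>
      two_pow_sub_ne_zero (Finset.mem_range.mp hi)
  have hC : (∏ i ∈ range k₃, ((2:ℚ) ^ (k₁ + k₂ + k₃) - 2 ^ (k₁ + k₂ + i))) ≠ 0 :=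
    Finset.prod_ne_zero_iff.mpr fun i hi =>
      two_pow_sub_ne_zero (by have := Finset.mem_range.mp hi; omega)
  have ha' : (∏ i ∈ range k₁, ((8:ℚ) ^ k₁ - 4 ^ k₁ * 2 ^ i)) ≠ 0 :=
    Finset.prod_ne_zero_iff.mpr fun i hi => by
      have h8 : (8:ℚ) ^ k₁ - 4 ^ k₁ * 2 ^ i = 4 ^ k₁ * (2 ^ k₁ - 2 ^ i) := by
        rw [show (8:ℚ) = 4 * 2 by norm_num, mul_pow]; ring
      rw [h8]
      exact mul_ne_zero (by positivity) (two_pow_sub_ne_zero (Finset.mem_range.mp hi))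
  have hb' : (∏ i ∈ range k₂, ((4:ℚ) ^ k₂ - 2 ^ (k₂ + i))) ≠ 0 :=
    Finset.prod_ne_zero_iff.mpr fun i hi => by
      have h4 : (4:ℚ) ^ k₂ - 2 ^ (k₂ + i) = 2 ^ k₂ * (2 ^ k₂ - 2 ^ i) := by
        rw [show (4:ℚ) = 2 * 2 by norm_num, mul_pow, pow_add]; ring
      rw [h4]
      exact mul_ne_zero (by positivity) (two_pow_sub_ne_zero (Finset.mem_range.mp hi))
  rw [div_eq_div_iff (by apply_rules [mul_ne_zero, pow_ne_zero] <;> norm_num)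
    (by apply_rules [mul_ne_zero, pow_ne_zero] <;> norm_num)]
  ring

/-- If `β = k₁ + k₂ + k₃` then `N(α,β;α,k₁,k₂,k₃) = N(1,β;1,k₁,k₂,k₃)` for all `α ≥ 1`. -/
theorem MGN_full_binary_part (α β k₁ k₂ k₃ : ℕ) (hα : 1 ≤ α) (hβ : β = k₁ + k₂ + k₃) :
    MGN α β α k₁ k₂ k₃ = MGN 1 β 1 k₁ k₂ k₃ := by
  subst hβ
  rw [MGN_eval, MGN_eval]
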